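/- Let γ ∈ ℝ and consider the singular Cawley Lagrangian with dissipation L(q, v, z) = v¹v³ + (1/2)q²(q³)² − γz on ℝ³ × ℝ³ × ℝ, where q = (q¹, q², q³) and v = (v¹, v², v³). If a C² curve t ↦ (q(t), z(t)) satisfies the Herglotz equations, then q³(t) = 0 for all t and q̈¹(t) + γ·q̇¹(t) = 0 for all t (while q² remains undetermined). (The secondary constraint q³ = 0 produced by the constraint algorithm of the unified formalism holds along every solution, and the remaining dynamics is damped free motion in q¹.) -/

import Mathlib

open scoped BigOperators

noncomputable section

/-- Points of `Tℝ³ × ℝ = ℝ³ × ℝ³ × ℝ`, coordinates `(q, v, z)`. -/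
abbrev LPt (n : ℕ) := (Fin n → ℝ) × (Fin n → ℝ) × ℝ

/-- `∂L/∂qⁱ` at `x`. -/
def pderivQ {n : ℕ} (L : LPt n → ℝ) (x : LPt n) (i : Fin n) : ℝ :=
  fderiv ℝ L x (Pi.single i (1 : ℝ), (0 : Fin n → ℝ), (0 : ℝ))

/-- `∂L/∂vⁱ` at `x`. -/
def pderivV {n : ℕ} (L : LPt n → ℝ) (x : LPt n) (i : Fin n) : ℝ :=
  fderiv ℝ L x ((0 : Fin n → ℝ), Pi.single i (1 : ℝ), (0 : ℝ))

/-- `∂L/∂z` at `x`. -/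
def pderivZ {n : ℕ} (L : LPt n → ℝ) (x : LPt n) : ℝ :=
  fderiv ℝ L x ((0 : Fin n → ℝ), (0 : Fin n → ℝ), (1 : ℝ))

/-- The Herglotz (generalized Euler–Lagrange) equations for a curve `t ↦ (q(t), z(t))`. -/
def Herglotz {n : ℕ} (L : LPt n → ℝ) (q : ℝ → Fin n → ℝ) (z : ℝ → ℝ) : Prop :=
  ∀ t : ℝ, deriv z t = L (q t, deriv q t, z t) ∧
    ∀ i, deriv (fun s => pderivV L (q s, deriv q s, z s) i) t -
        pderivQ L (q t, deriv q t, z t) i =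
      pderivZ L (q t, deriv q t, z t) * pderivV L (q t, deriv q t, z t) i

/-- For the singular Cawley Lagrangian with dissipation
`L(q, v, z) = v¹v³ + ½q²(q³)² − γz`, every Herglotz solution satisfies the secondary
constraint `q³ = 0` produced by the constraint algorithm of the unified formalism, and
the remaining dynamics is damped free motion in `q¹`: `q̈¹ + γq̇¹ = 0`. -/
abbrev P3 := Fin 3 → ℝ
def Qc (j : Fin 3) : LPt 3 →L[ℝ] ℝ :=
  (ContinuousLinearMap.proj j).comp (ContinuousLinearMap.fst ℝ P3 (P3 × ℝ))
def Vc (j : Fin 3) : LPt 3 →L[ℝ] ℝ :=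
  (ContinuousLinearMap.proj j).comp ((ContinuousLinearMap.fst ℝ P3 ℝ).comp
    (ContinuousLinearMap.snd ℝ P3 (P3 × ℝ)))
def Zc : LPt 3 →L[ℝ] ℝ :=
  (ContinuousLinearMap.snd ℝ P3 ℝ).comp (ContinuousLinearMap.snd ℝ P3 (P3 × ℝ))

def Lfun (γ : ℝ) : LPt 3 → ℝ :=
  fun x => x.2.1 0 * x.2.1 2 + (1 / 2) * x.1 1 * (x.1 2) ^ 2 - γ * x.2.2

def Dc (γ : ℝ) (x : LPt 3) : LPt 3 →L[ℝ] ℝ :=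
  x.2.1 0 • Vc 2 + x.2.1 2 • Vc 0 +
    (((1/2)*(x.1 2)^2) • Qc 1 + ((1/2)*x.1 1*(2*x.1 2)) • Qc 2) - γ • Zc

lemma hasD (γ : ℝ) (x : LPt 3) : HasFDerivAt (Lfun γ) (Dc γ x) x := by
  have hV0 : HasFDerivAt (fun x : LPt 3 => x.2.1 0) (Vc 0) x := (Vc 0).hasFDerivAt
  have hV2 : HasFDerivAt (fun x : LPt 3 => x.2.1 2) (Vc 2) x := (Vc 2).hasFDerivAt
  have hQ1 : HasFDerivAt (fun x : LPt 3 => x.1 1) (Qc 1) x := (Qc 1).hasFDerivAt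
  have hQ2 : HasFDerivAt (fun x : LPt 3 => x.1 2) (Qc 2) x := (Qc 2).hasFDerivAt
  have hZ : HasFDerivAt (fun x : LPt 3 => x.2.2) Zc x := Zc.hasFDerivAt
  have h3 := ((hV0.mul hV2).add ((hQ1.const_mul (1/2:ℝ)).mul (hQ2.mul hQ2))).sub
    (hZ.const_mul γ)
  unfold Lfun Dc
  simp only [pow_two]
  refine h3.congr_fderiv ?_
  ext w <;> simp [Qc, Vc, Zc] <;> ring

lemma fderivL (γ : ℝ) (x : LPt 3) : fderiv ℝ (Lfun γ) x = Dc γ x := (hasD γ x).fderiv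

lemma pV (γ : ℝ) (x : LPt 3) (i : Fin 3) :
    pderivV (Lfun γ) x i = x.2.1 0 * (Pi.single i (1:ℝ) : P3) 2 + x.2.1 2 * (Pi.single i (1:ℝ) : P3) 0 := by
  rw [pderivV, fderivL]
  simp [Dc, Qc, Vc, Zc]

lemma pQ (γ : ℝ) (x : LPt 3) (i : Fin 3) :
    pderivQ (Lfun γ) x i = ((1/2)*(x.1 2)^2) * (Pi.single i (1:ℝ) : P3) 1
      + ((1/2)*x.1 1*(2*x.1 2)) * (Pi.single i (1:ℝ) : P3) 2 := by
  rw [pderivQ, fderivL]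
  simp [Dc, Qc, Vc, Zc]

lemma pZ (γ : ℝ) (x : LPt 3) : pderivZ (Lfun γ) x = -γ := by
  rw [pderivZ, fderivL]
  simp [Dc, Qc, Vc, Zc]

theorem cawley_with_dissipation (γ : ℝ)
    (L : LPt 3 → ℝ)
    (hLdef : ∀ x : LPt 3, L x =
      x.2.1 0 * x.2.1 2 + (1 / 2) * x.1 1 * (x.1 2) ^ 2 - γ * x.2.2)
    (q : ℝ → Fin 3 → ℝ) (z : ℝ → ℝ)
    (hcurve : ContDiff ℝ 2 (fun t => (q t, z t)))
    (hherglotz : Herglotz L q z) :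
    (∀ t : ℝ, q t 2 = 0) ∧
      (∀ t : ℝ, deriv (deriv q) t 0 + γ * deriv q t 0 = 0) := by
  have hL : L = Lfun γ := funext hLdef
  subst hL
  -- secondary constraint
  have hq3 : ∀ t : ℝ, q t 2 = 0 := by
    intro t
    have h := (hherglotz t).2 1
    rw [pQ, pZ] at h
    simp only [pV] at h
    simp [Pi.single_apply] at h
    exact h
  refine ⟨hq3, fun t => ?_⟩
  have h := (hherglotz t).2 2
  rw [pQ, pZ] at h
  simp only [pV] at h
  simp [Pi.single_apply, hq3 t] at h
  -- h : deriv (fun s => deriv q s 0) t = -γ * deriv q t 0 (roughly)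
  have hq : ContDiff ℝ 2 q := hcurve.fst
  have hdq : Differentiable ℝ (deriv q) := by
    have := (contDiff_succ_iff_deriv (n := 1)).mp (by exact_mod_cast hq)
    exact this.2.2.differentiable (by simp)
  have hproj : deriv (fun s => deriv q s 0) t = deriv (deriv q) t 0 := by
    have h1 : HasDerivAt (deriv q) (deriv (deriv q) t) t := (hdq t).hasDerivAt
    have h2 := ((ContinuousLinearMap.proj (R := ℝ) (φ := fun _ : Fin 3 => ℝ)
      0)).hasFDerivAt.comp_hasDerivAt t h1
    exact h2.deriv
  rw [← hproj]
  linarith [h]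

end
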